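/- Let A be a real m×n matrix whose column space has dimension k, let U be a real m×k matrix with orthonormal columns (UᵀU = I_k) whose columns span the column space of A, let S be a real d×m matrix with rank(SA) = k, and let M be a real n×k matrix such that SAM has orthonormal columns ((SAM)ᵀ(SAM) = I_k). Then SU has rank k (so (SU)ᵀ(SU) is invertible), and, writing P = ((SU)ᵀ(SU))⁻¹(SU)ᵀ for the Moore–Penrose pseudoinverse of SU, the multiset of eigenvalues of the k×k symmetric matrix (AM)ᵀ(AM) equals the multiset of eigenvalues of the k×k symmetric matrix PPᵀ; equivalently, the singular values of AM (with multiplicity) coincide with the singular values of (SU)†. -/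

import Mathlib

open Matrix

open Polynomial in
lemma charpoly_conj_aux {k : ℕ} (X Y : Matrix (Fin k) (Fin k) ℝ) (hX : IsUnit X.det) :
    (X * Y * X⁻¹).charpoly = Y.charpoly := by
  have hinv : X * X⁻¹ = 1 := mul_nonsing_inv X hX
  set f : Matrix (Fin k) (Fin k) ℝ →+* Matrix (Fin k) (Fin k) ℝ[X] := (C : ℝ →+* ℝ[X]).mapMatrix
  have h1 : f X * f X⁻¹ = 1 := by rw [← _root_.map_mul, hinv, _root_.map_one]
  have hc : charmatrix (X * Y * X⁻¹) = f X * charmatrix Y * f X⁻¹ := by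
    simp only [charmatrix, mul_sub, sub_mul, _root_.map_mul]
    congr 1
    rw [← (scalar_commute (Polynomial.X : ℝ[X]) (fun r => Commute.all _ _) (f X)).eq,
      Matrix.mul_assoc, h1, Matrix.mul_one]
  have h2 : (f X).det * (f X⁻¹).det = 1 := by rw [← det_mul, h1, det_one]
  unfold Matrix.charpoly
  rw [hc, det_mul, det_mul]
  linear_combination Y.charmatrix.det * h2


/-- Proposition 3.1: if `U` has orthonormal columns spanning the column space of `A`,
`rank (S * A) = k`, and `M` orthogonalizes `S * A`, then `S * U` has full column rank and
the spectrum of `(A * M)ᵀ * (A * M)` equals that of `P * Pᵀ` where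
`P = ((S * U)ᵀ * (S * U))⁻¹ * (S * U)ᵀ` is the Moore–Penrose pseudoinverse of `S * U`;
the equality of eigenvalue multisets is expressed via equality of characteristic polynomials. -/
theorem spectrum_of_preconditioned_matrix {m n d k : ℕ}
    (A : Matrix (Fin m) (Fin n) ℝ) (hA : A.rank = k)
    (U : Matrix (Fin m) (Fin k) ℝ) (hU : Uᵀ * U = 1)
    (hspan : LinearMap.range A.mulVecLin = LinearMap.range U.mulVecLin)
    (S : Matrix (Fin d) (Fin m) ℝ) (hSA : (S * A).rank = k)
    (M : Matrix (Fin n) (Fin k) ℝ) (hM : (S * A * M)ᵀ * (S * A * M) = 1) :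
    (S * U).rank = k ∧ IsUnit ((S * U)ᵀ * (S * U)) ∧
      ((A * M)ᵀ * (A * M)).charpoly =
        ((((S * U)ᵀ * (S * U))⁻¹ * (S * U)ᵀ) *
          (((S * U)ᵀ * (S * U))⁻¹ * (S * U)ᵀ)ᵀ).charpoly := by
  -- A = U * (Uᵀ * A)
  have hAU : U * (Uᵀ * A) = A := by
    have hvec : ∀ x, (U * (Uᵀ * A)) *ᵥ x = A *ᵥ x := by
      intro x
      have hx : A.mulVecLin x ∈ LinearMap.range U.mulVecLin := by
        rw [← hspan]; exact LinearMap.mem_range_self _ x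
      obtain ⟨y, hy⟩ := hx
      simp only [mulVecLin_apply] at hy
      calc (U * (Uᵀ * A)) *ᵥ x = U *ᵥ (Uᵀ *ᵥ (A *ᵥ x)) := by
            rw [← mulVec_mulVec, ← mulVec_mulVec]
        _ = U *ᵥ (Uᵀ *ᵥ (U *ᵥ y)) := by rw [hy]
        _ = (U * (Uᵀ * U)) *ᵥ y := by rw [← mulVec_mulVec, ← mulVec_mulVec]
        _ = A *ᵥ x := by rw [hU, Matrix.mul_one, hy]
    ext i j
    have := congr_fun (hvec (Pi.single j 1)) i
    simpa [mulVec_single] using this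
  set B := Uᵀ * A with hB
  have hSA' : S * A = (S * U) * B := by rw [← hAU, Matrix.mul_assoc]
  -- rank (S * U) = k
  have hrank : (S * U).rank = k := by
    refine le_antisymm ((S * U).rank_le_width) ?_
    calc k = (S * A).rank := hSA.symm
      _ = ((S * U) * B).rank := by rw [hSA']
      _ ≤ (S * U).rank := rank_mul_le_left _ _
  -- invertibility of the Gram matrix T = (S*U)ᵀ * (S*U)
  have hrT : ((S * U)ᵀ * (S * U)).rank = k := by
    rw [rank_transpose_mul_self, hrank]
  have hTunit : IsUnit ((S * U)ᵀ * (S * U)) := by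
    rw [← Matrix.mulVec_surjective_iff_isUnit, ← Matrix.coe_mulVecLin,
      ← LinearMap.range_eq_top]
    apply Submodule.eq_top_of_finrank_eq
    have hfk : Module.finrank ℝ (Fin k → ℝ) = k := by simp
    rw [hfk]; exact hrT
  have hdT : IsUnit ((S * U)ᵀ * (S * U)).det :=
    (Matrix.isUnit_iff_isUnit_det _).mp hTunit
  refine ⟨hrank, hTunit, ?_⟩
  set T := (S * U)ᵀ * (S * U) with hT
  -- orthogonality relation for X = B * M
  have hM' : (B * M)ᵀ * (T * (B * M)) = 1 := by
    rw [hSA'] at hM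
    calc (B * M)ᵀ * (T * (B * M)) = (S * U * B * M)ᵀ * (S * U * B * M) := by
          simp only [hT, Matrix.transpose_mul, Matrix.mul_assoc]
      _ = 1 := hM
  have hdX : IsUnit (B * M).det := by
    have hdet : ((B * M)ᵀ.det * (T * (B * M)).det) = 1 := by
      rw [← det_mul, hM', det_one]
    rw [det_mul, det_transpose] at hdet
    exact IsUnit.of_mul_eq_one _ hdet
  -- T⁻¹ = (B*M) * (B*M)ᵀ
  have h4 : T * (B * M) * (B * M)ᵀ = 1 := mul_eq_one_comm.mp hM'
  have hTinv : T⁻¹ = (B * M) * (B * M)ᵀ := by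
    apply inv_eq_right_inv
    rw [← Matrix.mul_assoc T (B * M) ((B * M)ᵀ)]; exact h4
  -- LHS matrix
  have hL : (A * M)ᵀ * (A * M) = (B * M)ᵀ * (B * M) := by
    rw [← hAU]
    calc (U * B * M)ᵀ * (U * B * M)
        = (B * M)ᵀ * ((Uᵀ * U) * (B * M)) := by
          simp only [Matrix.transpose_mul, Matrix.mul_assoc]
      _ = (B * M)ᵀ * (B * M) := by rw [hU, Matrix.one_mul]
  -- RHS matrix
  have hTt : Tᵀ = T := by rw [hT, Matrix.transpose_mul, transpose_transpose]
  have hR : (T⁻¹ * (S * U)ᵀ) * (T⁻¹ * (S * U)ᵀ)ᵀ = T⁻¹ := by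
    calc (T⁻¹ * (S * U)ᵀ) * (T⁻¹ * (S * U)ᵀ)ᵀ
        = T⁻¹ * (((S * U)ᵀ * (S * U)) * (T⁻¹)ᵀ) := by
          simp only [Matrix.transpose_mul, transpose_transpose, Matrix.mul_assoc]
      _ = T⁻¹ * (T * T⁻¹) := by rw [transpose_nonsing_inv, hTt, ← hT]
      _ = T⁻¹ := by rw [mul_nonsing_inv _ hdT, Matrix.mul_one]
  have hconj : (B * M) * ((B * M)ᵀ * (B * M)) * (B * M)⁻¹ = (B * M) * (B * M)ᵀ := by
    rw [← Matrix.mul_assoc (B * M) ((B * M)ᵀ) (B * M),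
      Matrix.mul_assoc ((B * M) * (B * M)ᵀ) (B * M) ((B * M)⁻¹),
      mul_nonsing_inv _ hdX, Matrix.mul_one]
  rw [hL, hR, hTinv, ← hconj, charpoly_conj_aux _ _ hdX]
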